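/- Let a : ℝ → ℝ be continuous and T-periodic, a_T its average, and suppose λ and φ : ℝ × cl(Ω) → (0,∞) (T-periodic in t, C¹ in t) satisfy ∂_t φ − d₁[∫_Ω J(x−y) φ(t,y) dy − φ] − a(t) φ = λ φ on ℝ × cl(Ω). Define ψ(t,x) = e^{−∫₀ᵗ (a(s) − a_T) ds} φ(t,x) and ψ_T(x) = (1/T) ∫₀ᵀ ψ(t,x) dt. Then ψ is T-periodic in t, ψ_T > 0 on cl(Ω), and ψ_T satisfies the elliptic eigenvalue equation d₁[∫_Ω J(x−y) ψ_T(y) dy − ψ_T(x)] + a_T ψ_T(x) + λ ψ_T(x) = 0 for all x ∈ cl(Ω). -/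

import Mathlib

open Set MeasureTheory

/-- `ψ(t,x) = e^{−∫₀ᵗ (a(s) − a_T) ds} φ(t,x)`. -/
noncomputable def psiAux (T : ℝ) (aF : ℝ → ℝ) (φ : ℝ → ℝ → ℝ) (t x : ℝ) : ℝ :=
  Real.exp (-∫ s in (0:ℝ)..t, (aF s - (1 / T) * ∫ u in (0:ℝ)..T, aF u)) * φ t x

/-- `ψ_T(x) = (1/T) ∫₀ᵀ ψ(t,x) dt`. -/
noncomputable def psiT (T : ℝ) (aF : ℝ → ℝ) (φ : ℝ → ℝ → ℝ) (x : ℝ) : ℝ :=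
  (1 / T) * ∫ t in (0:ℝ)..T, psiAux T aF φ t x

/-- Lemma 3.3: the change of unknown `ψ = e^{−∫₀ᵗ(a−a_T)}φ`
transforms the time-periodic nonlocal eigenvalue problem
`∂_tφ − d₁[∫_Ω J(x−y)φ(t,y)dy − φ] − a(t)φ = λφ` into the elliptic problem:
`ψ` is `T`-periodic in `t`, `ψ_T > 0`, and
`d₁[∫_Ω J(x−y)ψ_T(y)dy − ψ_T] + a_Tψ_T + λψ_T = 0`. -/
theorem stmt_13 (T d₁ lam a b : ℝ) (aF J : ℝ → ℝ) (φ φt : ℝ → ℝ → ℝ)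
    (hT : 0 < T) (hd₁ : 0 < d₁) (hab : a < b)
    (haC : Continuous aF) (haper : ∀ t, aF (t + T) = aF t)
    (hJlip : ∃ L : NNReal, LipschitzWith L J) (hJpos : ∀ x, 0 ≤ J x)
    (hJsymm : ∀ x, J (-x) = J x) (hJint : Integrable J) (hJ1 : ∫ x, J x = 1)
    (hφpos : ∀ t, ∀ x ∈ Icc a b, 0 < φ t x)
    (hφper : ∀ t, ∀ x ∈ Icc a b, φ (t + T) x = φ t x)
    (hφcont : ContinuousOn (fun p : ℝ × ℝ => φ p.1 p.2) (univ ×ˢ Icc a b))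
    (hφd : ∀ t, ∀ x ∈ Icc a b, HasDerivAt (fun s => φ s x) (φt t x) t)
    (hφtcont : ContinuousOn (fun p : ℝ × ℝ => φt p.1 p.2) (univ ×ˢ Icc a b))
    (heig : ∀ t, ∀ x ∈ Icc a b,
      φt t x - d₁ * ((∫ y in a..b, J (x - y) * φ t y) - φ t x) - aF t * φ t x
        = lam * φ t x) :
    (∀ t, ∀ x ∈ Icc a b, psiAux T aF φ (t + T) x = psiAux T aF φ t x) ∧
    (∀ x ∈ Icc a b, 0 < psiT T aF φ x) ∧
    (∀ x ∈ Icc a b,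
      d₁ * ((∫ y in a..b, J (x - y) * psiT T aF φ y) - psiT T aF φ x)
        + ((1 / T) * ∫ u in (0:ℝ)..T, aF u) * psiT T aF φ x
        + lam * psiT T aF φ x = 0) := by
  obtain ⟨L, hJL⟩ := hJlip
  have hJcont : Continuous J := hJL.continuous
  -- abbreviations
  set abar : ℝ := (1 / T) * ∫ u in (0:ℝ)..T, aF u with habar
  set A : ℝ → ℝ := fun t => ∫ s in (0:ℝ)..t, (aF s - abar) with hAdef
  have hpsi : ∀ t x, psiAux T aF φ t x = Real.exp (-(A t)) * φ t x := by
    intro t x; rfl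
  have hgc : Continuous (fun s => aF s - abar) := haC.sub continuous_const
  have hAd : ∀ t, HasDerivAt A (aF t - abar) t := fun t =>
    (hgc.integral_hasStrictDerivAt 0 t).hasDerivAt
  have hAcont : Continuous A :=
    Differentiable.continuous (fun t => (hAd t).differentiableAt)
  have hA0 : A 0 = 0 := intervalIntegral.integral_same
  have hAT : A T = 0 := by
    have h : (∫ s in (0:ℝ)..T, (aF s - abar))
        = (∫ s in (0:ℝ)..T, aF s) - (T - 0) • abar := by
      rw [intervalIntegral.integral_sub (haC.intervalIntegrable 0 T)
        intervalIntegrable_const, intervalIntegral.integral_const]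
    show (∫ s in (0:ℝ)..T, (aF s - abar)) = 0
    rw [h, habar]
    rw [sub_zero, smul_eq_mul, ← mul_assoc, mul_one_div_cancel hT.ne', one_mul, sub_self]
  have hAper : ∀ t, A (t + T) = A t := by
    intro t
    have h1 : A t + ∫ s in t..(t + T), (aF s - abar) = A (t + T) :=
      intervalIntegral.integral_add_adjacent_intervals
        (hgc.intervalIntegrable 0 t) (hgc.intervalIntegrable t (t + T))
    have hper : Function.Periodic (fun s => aF s - abar) T := by
      intro s; simp [haper s]
    have h2 : (∫ s in t..(t + T), (aF s - abar)) =
        ∫ s in (0:ℝ)..(0 + T), (aF s - abar) := hper.intervalIntegral_add_eq t 0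
    rw [zero_add] at h2
    have h3 : (∫ s in (0:ℝ)..T, (aF s - abar)) = A T := rfl
    rw [h2, h3, hAT, add_zero] at h1
    exact h1.symm
  -- continuity of t ↦ φ t x
  have hφx : ∀ x ∈ Icc a b, Continuous (fun t => φ t x) := by
    intro x hx
    exact hφcont.comp_continuous (continuous_id.prodMk continuous_const)
      (fun t => ⟨mem_univ t, hx⟩)
  -- Part 1 : periodicity
  have part1 : ∀ t, ∀ x ∈ Icc a b, psiAux T aF φ (t + T) x = psiAux T aF φ t x := by
    intro t x hx
    rw [hpsi, hpsi, hAper, hφper t x hx]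
  -- Part 2 : positivity
  have hpsicont : ∀ x ∈ Icc a b, Continuous (fun t => psiAux T aF φ t x) := by
    intro x hx
    simp only [hpsi]
    exact (hAcont.neg.rexp).mul (hφx x hx)
  have part2 : ∀ x ∈ Icc a b, 0 < psiT T aF φ x := by
    intro x hx
    have hint : IntervalIntegrable (fun t => psiAux T aF φ t x) volume 0 T :=
      (hpsicont x hx).intervalIntegrable 0 T
    have hpos : 0 < ∫ t in (0:ℝ)..T, psiAux T aF φ t x := by
      apply intervalIntegral.intervalIntegral_pos_of_pos_on hint _ hT
      intro t ht
      rw [hpsi]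
      exact mul_pos (Real.exp_pos _) (hφpos t x hx)
    exact mul_pos (by positivity) hpos
  refine ⟨part1, part2, ?_⟩
  -- extension of φ by clamping
  set φc : ℝ → ℝ → ℝ := fun t y => φ t (max a (min y b)) with hφcdef
  have hclamp : ∀ y, max a (min y b) ∈ Icc a b :=
    fun y => ⟨le_max_left _ _, max_le hab.le (min_le_right _ _)⟩
  have hφccont : Continuous (Function.uncurry φc) := by
    have h : Continuous fun p : ℝ × ℝ => φ p.1 (max a (min p.2 b)) :=
      hφcont.comp_continuous (continuous_fst.prodMk
        (continuous_const.max (continuous_snd.min continuous_const)))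
        (fun p => ⟨mem_univ _, hclamp _⟩)
    exact h
  have hφceq : ∀ t, ∀ y ∈ Icc a b, φc t y = φ t y := by
    intro t y hy
    have : max a (min y b) = y := by
      rw [min_eq_left hy.2, max_eq_right hy.1]
    rw [hφcdef]; simp only [this]
  -- Part 3
  intro x hx
  -- the I integral and its continuity
  set I : ℝ → ℝ := fun t => ∫ y in a..b, J (x - y) * φc t y with hIdef
  have hIeq : ∀ t, (∫ y in a..b, J (x - y) * φ t y) = I t := by
    intro t
    apply intervalIntegral.integral_congr
    intro y hy
    rw [uIcc_of_le hab.le] at hy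
    show J (x - y) * φ t y = J (x - y) * φc t y
    rw [hφceq t y hy]
  have hIcont : Continuous I := by
    apply intervalIntegral.continuous_parametric_intervalIntegral_of_continuous' (μ := volume)
      (f := fun t y => J (x - y) * φc t y)
    exact ((hJcont.comp (continuous_const.sub continuous_snd)).mul hφccont)
  -- pointwise derivative of ψ in t
  set G : ℝ → ℝ := fun t =>
    d₁ * (Real.exp (-(A t)) * I t - psiAux T aF φ t x)
      + abar * psiAux T aF φ t x + lam * psiAux T aF φ t x with hGdef
  have hderiv : ∀ t, HasDerivAt (fun s => psiAux T aF φ s x) (G t) t := by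
    intro t
    have hE : HasDerivAt (fun s => Real.exp (-(A s)))
        (Real.exp (-(A t)) * (-(aF t - abar))) t := (hAd t).neg.exp
    have h := hE.mul (hφd t x hx)
    have heq : ∀ s : ℝ, Real.exp (-(A s)) * φ s x = psiAux T aF φ s x := fun s =>
      (hpsi s x).symm
    have h2 : HasDerivAt (fun s => psiAux T aF φ s x)
        (Real.exp (-(A t)) * (-(aF t - abar)) * φ t x
          + Real.exp (-(A t)) * φt t x) t := by
      refine h.congr_of_eventuallyEq ?_
      filter_upwards with s using (heq s).symm
    convert h2 using 1
    have hq := heig t x hx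
    rw [hIeq t] at hq
    simp only [hGdef, hpsi]
    linear_combination (-(Real.exp (-(A t)))) * hq
  -- integrability of G
  have hEcont : Continuous fun t => Real.exp (-(A t)) := hAcont.neg.rexp
  have hφxc : Continuous fun t => φ t x := hφx x hx
  have hGcont : Continuous G := by
    simp only [hGdef, hpsi]
    exact ((continuous_const.mul ((hEcont.mul hIcont).sub (hEcont.mul hφxc))).add
      (continuous_const.mul (hEcont.mul hφxc))).add
      (continuous_const.mul (hEcont.mul hφxc))
  -- FTC : integral of G over a period is 0
  have hFTC : (∫ t in (0:ℝ)..T, G t) = 0 := by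
    rw [intervalIntegral.integral_eq_sub_of_hasDerivAt
      (fun t _ => hderiv t) (hGcont.intervalIntegrable 0 T)]
    have : psiAux T aF φ T x = psiAux T aF φ 0 x := by
      have := part1 0 x hx
      rwa [zero_add] at this
    rw [this, sub_self]
  -- split integral of G
  have hS : (∫ t in (0:ℝ)..T, psiAux T aF φ t x) = T * psiT T aF φ x := by
    rw [psiT]; field_simp
  have hsplit : (∫ t in (0:ℝ)..T, G t) =
      d₁ * ((∫ t in (0:ℝ)..T, Real.exp (-(A t)) * I t)
          - (T * psiT T aF φ x))
        + abar * (T * psiT T aF φ x) + lam * (T * psiT T aF φ x) := by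
    rw [← hS, hGdef]
    have h1 : IntervalIntegrable (fun t => Real.exp (-(A t)) * I t) volume 0 T :=
      (hEcont.mul hIcont).intervalIntegrable 0 T
    have h2 : IntervalIntegrable (fun t => psiAux T aF φ t x) volume 0 T :=
      (hpsicont x hx).intervalIntegrable 0 T
    rw [intervalIntegral.integral_add (((h1.sub h2).const_mul d₁).add
      (h2.const_mul abar)) (h2.const_mul lam),
      intervalIntegral.integral_add ((h1.sub h2).const_mul d₁) (h2.const_mul abar),
      intervalIntegral.integral_const_mul, intervalIntegral.integral_const_mul,
      intervalIntegral.integral_const_mul, intervalIntegral.integral_sub h1 h2]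
  -- Fubini
  have hFub : (∫ t in (0:ℝ)..T, Real.exp (-(A t)) * I t)
      = T * ∫ y in a..b, J (x - y) * psiT T aF φ y := by
    have hstep1 : ∀ t, Real.exp (-(A t)) * I t
        = ∫ y in a..b, J (x - y) * (Real.exp (-(A t)) * φc t y) := by
      intro t
      rw [hIdef, ← intervalIntegral.integral_const_mul]
      congr 1; funext y; ring
    have hFc : Continuous (fun p : ℝ × ℝ =>
        J (x - p.2) * (Real.exp (-(A p.1)) * φc p.1 p.2)) := by
      have := hφccont
      fun_prop
    have hInt : Integrable (fun p : ℝ × ℝ =>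
        J (x - p.2) * (Real.exp (-(A p.1)) * φc p.1 p.2))
        ((volume.restrict (Ioc 0 T)).prod (volume.restrict (Ioc a b))) := by
      rw [Measure.prod_restrict, ← Measure.volume_eq_prod]
      exact (hFc.continuousOn.integrableOn_compact
        (isCompact_Icc.prod isCompact_Icc)).mono_set
        (prod_mono Ioc_subset_Icc_self Ioc_subset_Icc_self)
    calc (∫ t in (0:ℝ)..T, Real.exp (-(A t)) * I t)
        = ∫ t in Ioc (0:ℝ) T, ∫ y in a..b,
            J (x - y) * (Real.exp (-(A t)) * φc t y) := by
          rw [intervalIntegral.integral_of_le hT.le]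
          exact setIntegral_congr_fun measurableSet_Ioc (fun t _ => hstep1 t)
      _ = ∫ t in Ioc (0:ℝ) T, ∫ y in Ioc a b,
            J (x - y) * (Real.exp (-(A t)) * φc t y) := by
          apply setIntegral_congr_fun measurableSet_Ioc
          intro t _
          exact intervalIntegral.integral_of_le hab.le
      _ = ∫ y in Ioc a b, ∫ t in Ioc (0:ℝ) T,
            J (x - y) * (Real.exp (-(A t)) * φc t y) := by
          exact integral_integral_swap hInt
      _ = ∫ y in Ioc a b, J (x - y) * (T * psiT T aF φ y) := by
          apply setIntegral_congr_fun measurableSet_Ioc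
          intro y hy
          have hy' : y ∈ Icc a b := Ioc_subset_Icc_self hy
          simp only []
          rw [← intervalIntegral.integral_of_le hT.le,
            intervalIntegral.integral_const_mul]
          congr 1
          have : (∫ t in (0:ℝ)..T, Real.exp (-(A t)) * φc t y)
              = ∫ t in (0:ℝ)..T, psiAux T aF φ t y := by
            congr 1; funext t; rw [hφceq t y hy', hpsi]
          rw [this, psiT]
          field_simp
      _ = T * ∫ y in Ioc a b, J (x - y) * psiT T aF φ y := by
          rw [← integral_const_mul]
          apply setIntegral_congr_fun measurableSet_Ioc
          intro y _
          simp only []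
          ring
      _ = T * ∫ y in a..b, J (x - y) * psiT T aF φ y := by
          rw [intervalIntegral.integral_of_le hab.le]
  -- conclusion
  rw [hFTC, hFub] at hsplit
  have hfinal := hsplit.symm
  have hT' : T ≠ 0 := hT.ne'
  have goal : d₁ * ((∫ y in a..b, J (x - y) * psiT T aF φ y) - psiT T aF φ x)
      + abar * psiT T aF φ x + lam * psiT T aF φ x = 0 := by
    have := hfinal
    nlinarith [this, hT, sq_nonneg T]
  exact goal
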